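/- arXiv:1312.3734 — 2 statements merged into one kernel-verified Lean document; each statement's English description precedes it below -/
import Mathlib

section
/- Let H be a real Hilbert space and let f, g : H → ℝ ∪ {+∞} be proper lower semicontinuous convex functions (f, g ∈ Γ₀(H)). Assume either that g is supercoercive, or that f is bounded from below and g is coercive. Then the biconjugate identity (f* + g*)* = f □ g holds: for every x ∈ H, sup_{φ∈H} ( ⟨φ,x⟩ − f*(φ) − g*(φ) ) = inf_{y∈H} ( f(y) + g(x−y) ). -/
set_option linter.unusedSectionVars false
set_option maxHeartbeats 1000000


noncomputable section
open Filter Topology Pointwise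

variable {H : Type*} [NormedAddCommGroup H] [InnerProductSpace ℝ H] [CompleteSpace H]

/-- An extended-real-valued function `f : H → ℝ ∪ {+∞}` (i.e. never `-∞`) is *proper*
if it is finite at at least one point. -/
def EProper (f : H → EReal) : Prop := (∀ x, f x ≠ ⊥) ∧ (∃ x, f x ≠ ⊤)

/-- The infimal convolution `(f □ g)(x) = ⨅_{y} (f y + g (x - y))`. -/
def infConv (f g : H → EReal) (x : H) : EReal := ⨅ y : H, f y + g (x - y)

/-- The convex conjugate `f*(φ) = ⨆_{x} (⟨φ, x⟩ - f x)`. -/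
def conj (f : H → EReal) (φ : H) : EReal := ⨆ x : H, ((inner ℝ φ x : ℝ) : EReal) - f x

/-- Convexity of an extended-real-valued function (extended-real arithmetic). -/
def EConvexOn (f : H → EReal) : Prop :=
  ∀ x y : H, ∀ t : ℝ, 0 < t → t < 1 →
    f (t • x + (1 - t) • y) ≤ (t : EReal) * f x + ((1 - t : ℝ) : EReal) * f y

/-- Strict convexity: strict inequality whenever `x ≠ y` and both values are finite. -/
def EStrictConvexOn (f : H → EReal) : Prop :=
  ∀ x y : H, x ≠ y → f x ≠ ⊤ → f y ≠ ⊤ → ∀ t : ℝ, 0 < t → t < 1 →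
    f (t • x + (1 - t) • y) < (t : EReal) * f x + ((1 - t : ℝ) : EReal) * f y

/-- `f` is coercive: `f x → +∞` as `‖x‖ → +∞`. -/
def ECoercive (f : H → EReal) : Prop :=
  ∀ M : ℝ, ∃ R : ℝ, ∀ x : H, R ≤ ‖x‖ → (M : EReal) ≤ f x

/-- `f` is supercoercive: `f x / ‖x‖ → +∞` as `‖x‖ → +∞`. -/
def ESupercoercive (f : H → EReal) : Prop :=
  ∀ M : ℝ, ∃ R : ℝ, ∀ x : H, R ≤ ‖x‖ → ((M * ‖x‖ : ℝ) : EReal) ≤ f x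

/-- The Moreau envelope `ᵉf(x) = ⨅_{y} (f y + ‖x - y‖² / (2ε))`. -/
def moreau (ε : ℝ) (f : H → EReal) (x : H) : EReal :=
  ⨅ y : H, f y + ((‖x - y‖ ^ 2 / (2 * ε) : ℝ) : EReal)

/-- `p` is a minimizer of `y ↦ f y + ‖x - y‖²/(2ε)`, i.e. a proximal point of `f` at `x`. -/
def IsProx (ε : ℝ) (f : H → EReal) (x p : H) : Prop :=
  ∀ y : H, f p + ((‖x - p‖ ^ 2 / (2 * ε) : ℝ) : EReal)
    ≤ f y + ((‖x - y‖ ^ 2 / (2 * ε) : ℝ) : EReal)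

/-- The subdifferential `∂f(p) = {φ : f p finite and ∀ y, f y ≥ f p + ⟨φ, y - p⟩}`. -/
def subdiff (f : H → EReal) (p : H) : Set H :=
  {φ : H | f p ≠ ⊤ ∧ ∀ y : H, f p + ((inner ℝ φ (y - p) : ℝ) : EReal) ≤ f y}

/-! ### Auxiliary lemmas -/

lemma EReal.exists_real {a : EReal} (hb : a ≠ ⊥) (ht : a ≠ ⊤) : ∃ r : ℝ, a = (r : EReal) :=
  ⟨a.toReal, (EReal.coe_toReal ht hb).symm⟩

lemma conj_ne_bot (f : H → EReal) (hf₀ : EProper f) (φ : H) : conj f φ ≠ ⊥ := by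
  obtain ⟨hb, x₀, ht⟩ := hf₀
  obtain ⟨r, hr⟩ := EReal.exists_real (hb x₀) ht
  have h1 : ((inner ℝ φ x₀ : ℝ) : EReal) - f x₀ ≤ conj f φ :=
    le_iSup (fun x => ((inner ℝ φ x : ℝ) : EReal) - f x) x₀
  rw [hr] at h1
  intro hc
  rw [hc, le_bot_iff] at h1
  rw [← EReal.coe_sub] at h1
  exact EReal.coe_ne_bot _ h1

/-- affine minorant from conjugate -/
lemma affine_le_of_conj (f : H → EReal) (hb : ∀ x, f x ≠ ⊥) (φ x : H) :
    ((inner ℝ φ x : ℝ) : EReal) - conj f φ ≤ f x := by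
  rcases eq_or_ne (f x) ⊤ with h | h
  · rw [h]; exact le_top
  obtain ⟨r, hr⟩ := EReal.exists_real (hb x) h
  have h1 : ((inner ℝ φ x : ℝ) : EReal) - f x ≤ conj f φ :=
    le_iSup (fun z => ((inner ℝ φ z : ℝ) : EReal) - f z) x
  rw [hr] at h1 ⊢
  rcases eq_or_ne (conj f φ) ⊤ with hc | hc
  · rw [hc, show ((inner ℝ φ x : ℝ) : EReal) - ⊤ = ⊥ by rfl]
    exact bot_le
  rcases eq_or_ne (conj f φ) ⊥ with hc' | hc'
  · rw [hc', ← EReal.coe_sub] at h1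
    exact absurd (le_bot_iff.mp h1) (EReal.coe_ne_bot _)
  obtain ⟨s, hs⟩ := EReal.exists_real hc' hc
  rw [hs] at h1 ⊢
  rw [← EReal.coe_sub] at h1 ⊢
  rw [EReal.coe_le_coe_iff] at h1 ⊢
  linarith

/-- biconjugate is below the function -/
lemma biconj_le (f : H → EReal) (hb : ∀ x, f x ≠ ⊥) (x : H) :
    (⨆ φ : H, ((inner ℝ φ x : ℝ) : EReal) - conj f φ) ≤ f x :=
  iSup_le fun φ => affine_le_of_conj f hb φ x

/-- epigraph is closed -/
lemma epi_closed (f : H → EReal) (hf₁ : LowerSemicontinuous f) :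
    IsClosed {p : H × ℝ | f p.1 ≤ (p.2 : EReal)} := by
  have h := hf₁.isClosed_epigraph
  have hc : Continuous (fun p : H × ℝ => ((p.1, (p.2 : EReal)) : H × EReal)) :=
    (continuous_fst).prodMk (continuous_coe_real_ereal.comp continuous_snd)
  exact h.preimage hc

/-- epigraph is convex -/
lemma epi_convex (f : H → EReal) (hf₂ : EConvexOn f) :
    Convex ℝ {p : H × ℝ | f p.1 ≤ (p.2 : EReal)} := by
  rintro ⟨y, r⟩ hy ⟨z, q⟩ hz a b ha hb hab
  simp only [Set.mem_setOf_eq] at *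
  rcases eq_or_lt_of_le ha with rfl0 | ha'
  · have : b = 1 := by linarith
    subst this
    simp only [← rfl0, zero_smul, one_smul, zero_add, Prod.snd, Prod.fst] at *
    simpa using hz
  rcases eq_or_lt_of_le hb with rfl0 | hb'
  · have : a = 1 := by linarith
    subst this
    simp only [← rfl0, zero_smul, one_smul, add_zero, Prod.snd, Prod.fst] at *
    simpa using hy
  have hb1 : b = 1 - a := by linarith
  have ha1 : a < 1 := by linarith
  have key := hf₂ y z a ha' ha1
  have h1 : (a : EReal) * f y ≤ (a : EReal) * (r : EReal) := by
    apply mul_le_mul_of_nonneg_left hy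
    exact_mod_cast ha
  have h2 : ((1 - a : ℝ) : EReal) * f z ≤ ((1 - a : ℝ) : EReal) * (q : EReal) := by
    apply mul_le_mul_of_nonneg_left hz
    exact_mod_cast (by linarith : (0:ℝ) ≤ 1 - a)
  calc f ((a • (y, r) + b • (z, q) : H × ℝ).1) = f (a • y + (1 - a) • z) := by
        simp [Prod.smul_fst, hb1]
    _ ≤ (a : EReal) * f y + ((1 - a : ℝ) : EReal) * f z := key
    _ ≤ (a : EReal) * (r : EReal) + ((1 - a : ℝ) : EReal) * (q : EReal) :=
        add_le_add h1 h2
    _ = (((a • (y, r) + b • (z, q) : H × ℝ).2 : ℝ) : EReal) := by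
        rw [← EReal.coe_mul, ← EReal.coe_mul, ← EReal.coe_add]
        norm_cast
        simp [hb1]

/-- separation core -/
lemma sep_core (f : H → EReal) (hf₁ : LowerSemicontinuous f) (hf₂ : EConvexOn f)
    (hdom : ∃ p : H × ℝ, f p.1 ≤ (p.2 : EReal))
    (x : H) (t : ℝ) (ht : (t : EReal) < f x) :
    ∃ (ψ : H) (s u : ℝ), s ≤ 0 ∧ (∀ y : H, ∀ r : ℝ, f y ≤ (r : EReal) → inner ℝ ψ y + r * s < u) ∧
      u < inner ℝ ψ x + t * s := by
  have hxE : (x, t) ∉ {p : H × ℝ | f p.1 ≤ (p.2 : EReal)} := by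
    simp only [Set.mem_setOf_eq]; exact not_le.mpr ht
  obtain ⟨ℓ, u, hE, hx⟩ := geometric_hahn_banach_closed_point
    (epi_convex f hf₂) (epi_closed f hf₁) hxE
  set s : ℝ := ℓ (0, 1) with hs
  set ψ : H := (InnerProductSpace.toDual ℝ H).symm (ℓ.comp (ContinuousLinearMap.inl ℝ H ℝ)) with hψ
  have hdecomp : ∀ (y : H) (r : ℝ), ℓ (y, r) = inner ℝ ψ y + r * s := by
    intro y r
    have h1 : ((y, r) : H × ℝ) = (y, 0) + r • ((0 : H), (1 : ℝ)) := by
      simp [Prod.ext_iff]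
    rw [h1, map_add, map_smul]
    have h2 : (inner ℝ ψ y : ℝ) = ℓ (y, 0) := by
      rw [hψ]
      exact InnerProductSpace.toDual_symm_apply
    rw [← h2, smul_eq_mul, ← hs]
  rcases le_or_gt s 0 with hs0 | hs0
  · refine ⟨ψ, s, u, hs0, ?_, ?_⟩
    · intro y r hyr
      have := hE (y, r) hyr
      rwa [hdecomp] at this
    · have := hx
      rwa [hdecomp] at this
  · exfalso
    obtain ⟨⟨y₀, r₀⟩, hy₀⟩ := hdom
    set k : ℝ := max 0 ((u - inner ℝ ψ y₀ - r₀ * s) / s) + 1 with hk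
    have hk0 : (0 : ℝ) ≤ k := by
      rw [hk]
      have := le_max_left (0:ℝ) ((u - inner ℝ ψ y₀ - r₀ * s) / s)
      linarith
    have hmem : f ((y₀, r₀ + k) : H × ℝ).1 ≤ (((y₀, r₀ + k) : H × ℝ).2 : EReal) := by
      refine le_trans hy₀ ?_
      exact_mod_cast (by linarith : (r₀ : ℝ) ≤ r₀ + k)
    have h3 := hE (y₀, r₀ + k) hmem
    rw [hdecomp] at h3
    have h4 : (u - inner ℝ ψ y₀ - r₀ * s) / s < k := by
      rw [hk]
      exact (le_max_right (0:ℝ) _).trans_lt (lt_add_one _)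
    have h5 : u - inner ℝ ψ y₀ - r₀ * s < k * s := (div_lt_iff₀ hs0).mp h4
    nlinarith [h3, h5]

/-- conj bound from slope: case s < 0 -/
lemma conj_le_of_sep (f : H → EReal) (hb : ∀ y, f y ≠ ⊥) (ψ : H) (s u : ℝ) (hs : s < 0)
    (hsep : ∀ y : H, ∀ r : ℝ, f y ≤ (r : EReal) → inner ℝ ψ y + r * s < u) :
    conj f ((-s)⁻¹ • ψ) ≤ ((u / (-s) : ℝ) : EReal) := by
  have hv : (0:ℝ) < -s := by linarith
  have hsne : s ≠ 0 := ne_of_lt hs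
  apply iSup_le
  intro y
  rcases eq_or_ne (f y) ⊤ with h | h
  · rw [h, show ((inner ℝ ((-s)⁻¹ • ψ) y : ℝ) : EReal) - ⊤ = ⊥ by rfl]
    exact bot_le
  obtain ⟨ρ, hρ⟩ := EReal.exists_real (hb y) h
  have h1 := hsep y ρ (le_of_eq hρ)
  rw [hρ, ← EReal.coe_sub, EReal.coe_le_coe_iff]
  have h2 : (inner ℝ ((-s)⁻¹ • ψ) y : ℝ) = (-s)⁻¹ * inner ℝ ψ y := real_inner_smul_left _ _ _
  rw [h2, div_eq_inv_mul]
  have h3 : inner ℝ ψ y - ρ * (-s) < u := by nlinarith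
  have h4 : (-s)⁻¹ * (inner ℝ ψ y - ρ * (-s)) ≤ (-s)⁻¹ * u :=
    mul_le_mul_of_nonneg_left (le_of_lt h3) (le_of_lt (inv_pos.mpr hv))
  calc (-s)⁻¹ * inner ℝ ψ y - ρ = (-s)⁻¹ * (inner ℝ ψ y - ρ * (-s)) := by
        field_simp
        ring
    _ ≤ (-s)⁻¹ * u := h4

/-- there is a conjugate value that is not ⊤ -/
lemma exists_conj_ne_top (f : H → EReal) (hf₀ : EProper f) (hf₁ : LowerSemicontinuous f)
    (hf₂ : EConvexOn f) : ∃ φ : H, conj f φ ≠ ⊤ := by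
  obtain ⟨hb, x₀, htop⟩ := hf₀
  obtain ⟨r₀, hr₀⟩ := EReal.exists_real (hb x₀) htop
  have hdom : ∃ p : H × ℝ, f p.1 ≤ (p.2 : EReal) := ⟨(x₀, r₀), le_of_eq hr₀⟩
  have ht : ((r₀ - 1 : ℝ) : EReal) < f x₀ := by
    rw [hr₀]; exact_mod_cast sub_one_lt r₀
  obtain ⟨ψ, s, u, hs0, hsep, hlast⟩ := sep_core f hf₁ hf₂ hdom x₀ (r₀ - 1) ht
  rcases lt_or_eq_of_le hs0 with hs | hs
  · exact ⟨(-s)⁻¹ • ψ,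
      ((conj_le_of_sep f hb ψ s u hs hsep).trans_lt (EReal.coe_lt_top _)).ne⟩
  · exfalso
    subst hs
    have h1 := hsep x₀ r₀ (le_of_eq hr₀)
    simp only [mul_zero, add_zero] at h1 hlast
    linarith

/-- key: existence of near-optimal φ in the dual representation -/
lemma fm_exists (f : H → EReal) (hf₀ : EProper f) (hf₁ : LowerSemicontinuous f)
    (hf₂ : EConvexOn f) (x : H) (t : ℝ) (ht : (t : EReal) < f x) :
    ∃ φ : H, (t : EReal) < ((inner ℝ φ x : ℝ) : EReal) - conj f φ := by
  have hb := hf₀.1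
  obtain ⟨x₀, htop⟩ := hf₀.2
  obtain ⟨r₀, hr₀⟩ := EReal.exists_real (hb x₀) htop
  have hdom : ∃ p : H × ℝ, f p.1 ≤ (p.2 : EReal) := ⟨(x₀, r₀), le_of_eq hr₀⟩
  obtain ⟨ψ, s, u, hs0, hsep, hlast⟩ := sep_core f hf₁ hf₂ hdom x t ht
  rcases lt_or_eq_of_le hs0 with hs | hs
  · -- s < 0 : direct
    have hv : (0:ℝ) < -s := by linarith
    have hsne : s ≠ 0 := ne_of_lt hs
    refine ⟨(-s)⁻¹ • ψ, ?_⟩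
    have hconj := conj_le_of_sep f hb ψ s u hs hsep
    have hreal : t < inner ℝ ((-s)⁻¹ • ψ) x - u / (-s) := by
      have h2 : (inner ℝ ((-s)⁻¹ • ψ) x : ℝ) = (-s)⁻¹ * inner ℝ ψ x := real_inner_smul_left _ _ _
      rw [h2]
      rw [div_eq_inv_mul]
      have h3 : u < inner ℝ ψ x - t * (-s) := by nlinarith
      have h4 : (-s)⁻¹ * u < (-s)⁻¹ * (inner ℝ ψ x - t * (-s)) :=
        mul_lt_mul_of_pos_left h3 (inv_pos.mpr hv)
      have h5 : (-s)⁻¹ * (inner ℝ ψ x - t * (-s)) = (-s)⁻¹ * inner ℝ ψ x - t := by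
        field_simp
        ring
      linarith [h4]
    calc (t : EReal) < ((inner ℝ ((-s)⁻¹ • ψ) x - u / (-s) : ℝ) : EReal) :=
          EReal.coe_lt_coe_iff.mpr hreal
      _ = ((inner ℝ ((-s)⁻¹ • ψ) x : ℝ) : EReal) - ((u / (-s) : ℝ) : EReal) := by
          rw [← EReal.coe_sub]
      _ ≤ ((inner ℝ ((-s)⁻¹ • ψ) x : ℝ) : EReal) - conj f ((-s)⁻¹ • ψ) :=
          EReal.sub_le_sub le_rfl hconj
  · -- s = 0 : vertical case, f x = ⊤ direction
    subst hs
    simp only [mul_zero, add_zero] at hsep hlast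
    obtain ⟨φ₀, hφ₀top⟩ := exists_conj_ne_top f ⟨hb, x₀, htop⟩ hf₁ hf₂
    obtain ⟨c₀, hc₀⟩ := EReal.exists_real (conj_ne_bot f ⟨hb, x₀, htop⟩ φ₀) hφ₀top
    have hgap : (0:ℝ) < inner ℝ ψ x - u := by linarith
    set lam : ℝ := max 0 ((t - (inner ℝ φ₀ x - c₀)) / (inner ℝ ψ x - u)) + 1 with hlam
    have hlam0 : (0:ℝ) ≤ lam := by
      rw [hlam]
      have := le_max_left (0:ℝ) ((t - (inner ℝ φ₀ x - c₀)) / (inner ℝ ψ x - u))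
      linarith
    set φ : H := φ₀ + lam • ψ with hφ
    have hinner : ∀ y : H, (inner ℝ φ y : ℝ) = inner ℝ φ₀ y + lam * inner ℝ ψ y := by
      intro y
      rw [hφ, inner_add_left, real_inner_smul_left]
    have hconj : conj f φ ≤ ((c₀ + lam * u : ℝ) : EReal) := by
      apply iSup_le
      intro y
      rcases eq_or_ne (f y) ⊤ with h | h
      · rw [h, show ((inner ℝ φ y : ℝ) : EReal) - ⊤ = ⊥ by rfl]
        exact bot_le
      obtain ⟨ρ, hρ⟩ := EReal.exists_real (hb y) h
      have h1 : ((inner ℝ φ₀ y : ℝ) : EReal) - f y ≤ conj f φ₀ :=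
        le_iSup (fun z => ((inner ℝ φ₀ z : ℝ) : EReal) - f z) y
      rw [hρ, hc₀, ← EReal.coe_sub, EReal.coe_le_coe_iff] at h1
      have h2 := hsep y ρ (le_of_eq hρ)
      rw [hρ, ← EReal.coe_sub, EReal.coe_le_coe_iff, hinner y]
      nlinarith
    have hreal : t < inner ℝ φ x - (c₀ + lam * u) := by
      rw [hinner x]
      have h4 : (t - (inner ℝ φ₀ x - c₀)) / (inner ℝ ψ x - u) < lam := by
        rw [hlam]
        exact (le_max_right (0:ℝ) _).trans_lt (lt_add_one _)
      have h5 : t - (inner ℝ φ₀ x - c₀) < lam * (inner ℝ ψ x - u) := (div_lt_iff₀ hgap).mp h4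
      nlinarith
    refine ⟨φ, ?_⟩
    calc (t : EReal) < ((inner ℝ φ x - (c₀ + lam * u) : ℝ) : EReal) := EReal.coe_lt_coe_iff.mpr hreal
      _ = ((inner ℝ φ x : ℝ) : EReal) - ((c₀ + lam * u : ℝ) : EReal) := by rw [← EReal.coe_sub]
      _ ≤ ((inner ℝ φ x : ℝ) : EReal) - conj f φ := EReal.sub_le_sub le_rfl hconj

/-- **Fenchel–Moreau**: the biconjugate of a proper lsc convex function is itself. -/
lemma fenchelMoreau (f : H → EReal) (hf₀ : EProper f) (hf₁ : LowerSemicontinuous f)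
    (hf₂ : EConvexOn f) (x : H) :
    (⨆ φ : H, ((inner ℝ φ x : ℝ) : EReal) - conj f φ) = f x := by
  refine le_antisymm (biconj_le f hf₀.1 x) ?_
  by_contra hlt
  push_neg at hlt
  obtain ⟨t, h1, h2⟩ := EReal.exists_between_coe_real hlt
  obtain ⟨φ, hφ⟩ := fm_exists f hf₀ hf₁ hf₂ x t h2
  have h3 : ((inner ℝ φ x : ℝ) : EReal) - conj f φ ≤
      ⨆ φ : H, ((inner ℝ φ x : ℝ) : EReal) - conj f φ :=
    le_iSup (fun φ => ((inner ℝ φ x : ℝ) : EReal) - conj f φ) φ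
  exact absurd (hφ.trans_le h3) (not_lt.mpr h1.le)

/-! ### epsilon helpers -/

lemma EReal.coe_le_of_forall_sub_eps {A : ℝ} {B : EReal}
    (h : ∀ ε : ℝ, 0 < ε → ((A - ε : ℝ) : EReal) ≤ B) : (A : EReal) ≤ B := by
  by_contra hc
  push_neg at hc
  obtain ⟨c, h1, h2⟩ := EReal.exists_between_coe_real hc
  have h3 : c < A := EReal.coe_lt_coe_iff.mp h2
  have := h (A - c) (by linarith)
  rw [show (A - (A - c) : ℝ) = c by ring] at this
  exact absurd h1 (not_lt.mpr this)

lemma EReal.le_coe_of_forall_add_eps {A : ℝ} {B : EReal}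
    (h : ∀ ε : ℝ, 0 < ε → B ≤ ((A + ε : ℝ) : EReal)) : B ≤ (A : EReal) := by
  by_contra hc
  push_neg at hc
  obtain ⟨c, h1, h2⟩ := EReal.exists_between_coe_real hc
  have h3 : A < c := EReal.coe_lt_coe_iff.mp h1
  have := h (c - A) (by linarith)
  rw [show (A + (c - A) : ℝ) = c by ring] at this
  exact absurd h2 (not_lt.mpr this)

lemma EReal.add_lt_coe {a b : EReal} {c : ℝ} (ha : a ≠ ⊥) (hb : b ≠ ⊥)
    (h : a + b < (c : EReal)) : ∃ p q : ℝ, a = (p : EReal) ∧ b = (q : EReal) ∧ p + q < c := by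
  have hat : a ≠ ⊤ := by
    rintro rfl
    rw [EReal.top_add_of_ne_bot hb] at h
    exact absurd h (not_lt.mpr le_top)
  have hbt : b ≠ ⊤ := by
    rintro rfl
    rw [EReal.add_top_of_ne_bot ha] at h
    exact absurd h (not_lt.mpr le_top)
  obtain ⟨p, hp⟩ := EReal.exists_real ha hat
  obtain ⟨q, hq⟩ := EReal.exists_real hb hbt
  refine ⟨p, q, hp, hq, ?_⟩
  rw [hp, hq, ← EReal.coe_add, EReal.coe_lt_coe_iff] at h
  exact h

/-- affine minorant of a proper lsc convex function -/
lemma exists_affine_minorant (f : H → EReal) (hf₀ : EProper f) (hf₁ : LowerSemicontinuous f)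
    (hf₂ : EConvexOn f) : ∃ (φ : H) (c : ℝ), ∀ y : H, ((inner ℝ φ y - c : ℝ) : EReal) ≤ f y := by
  obtain ⟨φ, hφ⟩ := exists_conj_ne_top f hf₀ hf₁ hf₂
  obtain ⟨c, hc⟩ := EReal.exists_real (conj_ne_bot f hf₀ φ) hφ
  refine ⟨φ, c, fun y => ?_⟩
  have := affine_le_of_conj f hf₀.1 φ y
  rwa [hc, ← EReal.coe_sub] at this

/-- conjugate of the infimal convolution -/
lemma conj_infConv (f g : H → EReal) (hfb : ∀ x, f x ≠ ⊥) (hgb : ∀ x, g x ≠ ⊥)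
    (hbot : ∀ x, infConv f g x ≠ ⊥) (φ : H) :
    conj (infConv f g) φ = conj f φ + conj g φ := by
  apply le_antisymm
  · -- conj h ≤ conj f + conj g
    apply iSup_le
    intro x
    rcases eq_or_ne (infConv f g x) ⊤ with h | h
    · rw [h, show ((inner ℝ φ x : ℝ) : EReal) - ⊤ = ⊥ by rfl]
      exact bot_le
    obtain ⟨m, hm⟩ := EReal.exists_real (hbot x) h
    rw [hm, ← EReal.coe_sub]
    apply EReal.coe_le_of_forall_sub_eps
    intro ε hε
    have hlt : infConv f g x < ((m + ε : ℝ) : EReal) := by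
      rw [hm]; exact_mod_cast (by linarith : m < m + ε)
    obtain ⟨y, hy⟩ := iInf_lt_iff.mp hlt
    obtain ⟨p, q, hp, hq, hpq⟩ := EReal.add_lt_coe (hfb y) (hgb (x - y)) hy
    have h1 : ((inner ℝ φ y - p : ℝ) : EReal) ≤ conj f φ := by
      have := le_iSup (fun z => ((inner ℝ φ z : ℝ) : EReal) - f z) y
      rwa [hp, ← EReal.coe_sub] at this
    have h2 : ((inner ℝ φ (x - y) - q : ℝ) : EReal) ≤ conj g φ := by
      have := le_iSup (fun z => ((inner ℝ φ z : ℝ) : EReal) - g z) (x - y)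
      rwa [hq, ← EReal.coe_sub] at this
    calc ((inner ℝ φ x - m - ε : ℝ) : EReal)
        ≤ (((inner ℝ φ y - p) + (inner ℝ φ (x - y) - q) : ℝ) : EReal) := by
          rw [EReal.coe_le_coe_iff]
          have : (inner ℝ φ x : ℝ) = inner ℝ φ y + inner ℝ φ (x - y) := by
            rw [← inner_add_right]
            congr 1
            abel
          rw [this]
          linarith
      _ = ((inner ℝ φ y - p : ℝ) : EReal) + ((inner ℝ φ (x - y) - q : ℝ) : EReal) := by
          rw [← EReal.coe_add]
      _ ≤ conj f φ + conj g φ := add_le_add h1 h2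
  · -- conj f + conj g ≤ conj h
    apply EReal.add_le_of_forall_lt
    intro a' ha' b' hb'
    obtain ⟨y, hy⟩ := lt_iSup_iff.mp ha'
    obtain ⟨z, hz⟩ := lt_iSup_iff.mp hb'
    have hfy : f y ≠ ⊤ := by
      rintro h
      rw [h, show ((inner ℝ φ y : ℝ) : EReal) - ⊤ = ⊥ by rfl] at hy
      exact absurd hy (not_lt.mpr bot_le)
    have hgz : g z ≠ ⊤ := by
      rintro h
      rw [h, show ((inner ℝ φ z : ℝ) : EReal) - ⊤ = ⊥ by rfl] at hz
      exact absurd hz (not_lt.mpr bot_le)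
    obtain ⟨p, hp⟩ := EReal.exists_real (hfb y) hfy
    obtain ⟨q, hq⟩ := EReal.exists_real (hgb z) hgz
    rw [hp, ← EReal.coe_sub] at hy
    rw [hq, ← EReal.coe_sub] at hz
    have hh : infConv f g (y + z) ≤ ((p + q : ℝ) : EReal) := by
      have h1 : infConv f g (y + z) ≤ f y + g (y + z - y) := iInf_le _ y
      rw [show y + z - y = z by abel, hp, hq, ← EReal.coe_add] at h1
      exact h1
    have key : a' + b' ≤ ((inner ℝ φ (y + z) : ℝ) : EReal) - infConv f g (y + z) := by
      calc a' + b' ≤ ((inner ℝ φ y - p : ℝ) : EReal) + ((inner ℝ φ z - q : ℝ) : EReal) :=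
            add_le_add hy.le hz.le
        _ = ((inner ℝ φ (y + z) - (p + q) : ℝ) : EReal) := by
            rw [← EReal.coe_add]
            congr 1
            rw [inner_add_right]
            ring
        _ = ((inner ℝ φ (y + z) : ℝ) : EReal) - ((p + q : ℝ) : EReal) := by
            rw [← EReal.coe_sub]
        _ ≤ ((inner ℝ φ (y + z) : ℝ) : EReal) - infConv f g (y + z) :=
            EReal.sub_le_sub le_rfl hh
    exact key.trans (le_iSup (fun w => ((inner ℝ φ w : ℝ) : EReal) - infConv f g w) (y + z))

/-- convexity of the infimal convolution -/
lemma infConv_convex (f g : H → EReal) (hfb : ∀ x, f x ≠ ⊥) (hgb : ∀ x, g x ≠ ⊥)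
    (hf₂ : EConvexOn f) (hg₂ : EConvexOn g)
    (hbot : ∀ x, infConv f g x ≠ ⊥) : EConvexOn (infConv f g) := by
  intro x₁ x₂ t ht0 ht1
  have h1mt : (0:ℝ) < 1 - t := by linarith
  rcases eq_or_ne (infConv f g x₁) ⊤ with h₁ | h₁
  · rw [h₁, EReal.coe_mul_top_of_pos ht0]
    rw [EReal.top_add_of_ne_bot]
    · exact le_top
    · intro hc
      rcases eq_or_ne (infConv f g x₂) ⊤ with h₂ | h₂
      · rw [h₂, EReal.coe_mul_top_of_pos h1mt] at hc
        exact top_ne_bot hc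
      · obtain ⟨m, hm⟩ := EReal.exists_real (hbot x₂) h₂
        rw [hm, ← EReal.coe_mul] at hc
        exact EReal.coe_ne_bot _ hc
  rcases eq_or_ne (infConv f g x₂) ⊤ with h₂ | h₂
  · rw [h₂, EReal.coe_mul_top_of_pos h1mt]
    rw [EReal.add_top_of_ne_bot]
    · exact le_top
    · obtain ⟨m, hm⟩ := EReal.exists_real (hbot x₁) h₁
      rw [hm, ← EReal.coe_mul]
      exact EReal.coe_ne_bot _
  obtain ⟨m₁, hm₁⟩ := EReal.exists_real (hbot x₁) h₁
  obtain ⟨m₂, hm₂⟩ := EReal.exists_real (hbot x₂) h₂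
  rw [hm₁, hm₂, ← EReal.coe_mul, ← EReal.coe_mul, ← EReal.coe_add]
  apply EReal.le_coe_of_forall_add_eps
  intro ε hε
  have hlt₁ : infConv f g x₁ < ((m₁ + ε : ℝ) : EReal) := by
    rw [hm₁]; exact_mod_cast (by linarith : m₁ < m₁ + ε)
  have hlt₂ : infConv f g x₂ < ((m₂ + ε : ℝ) : EReal) := by
    rw [hm₂]; exact_mod_cast (by linarith : m₂ < m₂ + ε)
  obtain ⟨y₁, hy₁⟩ := iInf_lt_iff.mp hlt₁
  obtain ⟨y₂, hy₂⟩ := iInf_lt_iff.mp hlt₂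
  obtain ⟨p₁, q₁, hp₁, hq₁, hpq₁⟩ := EReal.add_lt_coe (hfb y₁) (hgb (x₁ - y₁)) hy₁
  obtain ⟨p₂, q₂, hp₂, hq₂, hpq₂⟩ := EReal.add_lt_coe (hfb y₂) (hgb (x₂ - y₂)) hy₂
  have hkey : infConv f g (t • x₁ + (1 - t) • x₂) ≤
      f (t • y₁ + (1 - t) • y₂) + g ((t • x₁ + (1 - t) • x₂) - (t • y₁ + (1 - t) • y₂)) :=
    iInf_le _ (t • y₁ + (1 - t) • y₂)
  have harg : (t • x₁ + (1 - t) • x₂) - (t • y₁ + (1 - t) • y₂)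
      = t • (x₁ - y₁) + (1 - t) • (x₂ - y₂) := by
    rw [smul_sub, smul_sub]
    abel
  have hf' := hf₂ y₁ y₂ t ht0 ht1
  have hg' := hg₂ (x₁ - y₁) (x₂ - y₂) t ht0 ht1
  rw [hp₁, hp₂, ← EReal.coe_mul, ← EReal.coe_mul, ← EReal.coe_add] at hf'
  rw [hq₁, hq₂, ← EReal.coe_mul, ← EReal.coe_mul, ← EReal.coe_add] at hg'
  calc infConv f g (t • x₁ + (1 - t) • x₂)
      ≤ f (t • y₁ + (1 - t) • y₂) + g (t • (x₁ - y₁) + (1 - t) • (x₂ - y₂)) := by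
        rw [← harg]; exact hkey
    _ ≤ ((t * p₁ + (1 - t) * p₂ : ℝ) : EReal) + ((t * q₁ + (1 - t) * q₂ : ℝ) : EReal) :=
        add_le_add hf' hg'
    _ = ((t * p₁ + (1 - t) * p₂ + (t * q₁ + (1 - t) * q₂) : ℝ) : EReal) := by
        rw [← EReal.coe_add]
    _ ≤ ((t * m₁ + (1 - t) * m₂ + ε : ℝ) : EReal) := by
        rw [EReal.coe_le_coe_iff]
        nlinarith

/-- uniform lower bound and near-minimizer bound for the inf-convolution -/
lemma infConv_bounds (f g : H → EReal) (hf₀ : EProper f) (hf₁ : LowerSemicontinuous f)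
    (hf₂ : EConvexOn f) (hg₀ : EProper g) (hg₁ : LowerSemicontinuous g) (hg₂ : EConvexOn g)
    (hcoer : ESupercoercive g ∨ ((∃ m : ℝ, ∀ x, (m : EReal) ≤ f x) ∧ ECoercive g)) (B c : ℝ) :
    ∃ ρ m : ℝ, (∀ x y : H, ‖x‖ ≤ B → (m : EReal) ≤ f y + g (x - y)) ∧
      (∀ x y : H, ‖x‖ ≤ B → f y + g (x - y) ≤ (c : EReal) → ‖y‖ ≤ ρ) := by
  obtain ⟨φ₁, c₁, hmin₁⟩ := exists_affine_minorant f hf₀ hf₁ hf₂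
  obtain ⟨φ₂, c₂, hmin₂⟩ := exists_affine_minorant g hg₀ hg₁ hg₂
  have hm₁ : ∀ (y : H) (p : ℝ), f y = (p : EReal) → -(‖φ₁‖ * ‖y‖) - c₁ ≤ p := by
    intro y p hp
    have h1 := hmin₁ y
    rw [hp, EReal.coe_le_coe_iff] at h1
    have h2 := abs_real_inner_le_norm φ₁ y
    have h3 := neg_abs_le (inner ℝ φ₁ y : ℝ)
    linarith
  have hm₂ : ∀ (z : H) (q : ℝ), g z = (q : EReal) → -(‖φ₂‖ * ‖z‖) - c₂ ≤ q := by
    intro z q hq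
    have h1 := hmin₂ z
    rw [hq, EReal.coe_le_coe_iff] at h1
    have h2 := abs_real_inner_le_norm φ₂ z
    have h3 := neg_abs_le (inner ℝ φ₂ z : ℝ)
    linarith
  have hnorm : ∀ x y : H, ‖y‖ ≤ ‖x‖ + ‖x - y‖ := by
    intro x y
    have := norm_sub_le x (x - y)
    rwa [show x - (x - y) = y by abel] at this
  rcases hcoer with hsc | ⟨⟨mf, hmf⟩, hco⟩
  · -- supercoercive case
    obtain ⟨R₀, hR₀⟩ := hsc (‖φ₁‖ + 1)
    set R : ℝ := max R₀ 0 with hRdef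
    have hR0 : (0:ℝ) ≤ R := le_max_right _ _
    have hR : ∀ (z : H) (q : ℝ), g z = (q : EReal) → R ≤ ‖z‖ → (‖φ₁‖ + 1) * ‖z‖ ≤ q := by
      intro z q hq hz
      have := hR₀ z (le_trans (le_max_left _ _) hz)
      rw [hq, EReal.coe_le_coe_iff] at this
      exact this
    refine ⟨max (B + R) (c + B + ‖φ₁‖ * B + c₁),
      min (-(‖φ₁‖ * (B + R)) - c₁ - ‖φ₂‖ * R - c₂) (-B - ‖φ₁‖ * B - c₁), ?_, ?_⟩
    · intro x y hx
      rcases eq_or_ne (f y) ⊤ with h | h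
      · rw [h, EReal.top_add_of_ne_bot (hg₀.1 _)]; exact le_top
      rcases eq_or_ne (g (x - y)) ⊤ with h' | h'
      · rw [h', EReal.add_top_of_ne_bot (hf₀.1 _)]; exact le_top
      obtain ⟨p, hp⟩ := EReal.exists_real (hf₀.1 y) h
      obtain ⟨q, hq⟩ := EReal.exists_real (hg₀.1 (x - y)) h'
      rw [hp, hq, ← EReal.coe_add, EReal.coe_le_coe_iff]
      have hyp := hm₁ y p hp
      have hny := hnorm x y
      rcases le_or_gt R ‖x - y‖ with hz | hz
      · have hq' := hR (x - y) q hq hz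
        have hminle : min (-(‖φ₁‖ * (B + R)) - c₁ - ‖φ₂‖ * R - c₂) (-B - ‖φ₁‖ * B - c₁)
            ≤ -B - ‖φ₁‖ * B - c₁ := min_le_right _ _
        nlinarith [norm_nonneg y, norm_nonneg (x - y), norm_nonneg φ₁]
      · have hq' := hm₂ (x - y) q hq
        have hminle : min (-(‖φ₁‖ * (B + R)) - c₁ - ‖φ₂‖ * R - c₂) (-B - ‖φ₁‖ * B - c₁)
            ≤ -(‖φ₁‖ * (B + R)) - c₁ - ‖φ₂‖ * R - c₂ := min_le_left _ _
        nlinarith [norm_nonneg y, norm_nonneg (x - y), norm_nonneg φ₁, norm_nonneg φ₂]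
    · intro x y hx hle
      have h : f y ≠ ⊤ := by
        rintro h
        rw [h, EReal.top_add_of_ne_bot (hg₀.1 _)] at hle
        exact absurd hle (not_le.mpr (EReal.coe_lt_top c))
      have h' : g (x - y) ≠ ⊤ := by
        rintro h'
        rw [h', EReal.add_top_of_ne_bot (hf₀.1 _)] at hle
        exact absurd hle (not_le.mpr (EReal.coe_lt_top c))
      obtain ⟨p, hp⟩ := EReal.exists_real (hf₀.1 y) h
      obtain ⟨q, hq⟩ := EReal.exists_real (hg₀.1 (x - y)) h'
      rw [hp, hq, ← EReal.coe_add, EReal.coe_le_coe_iff] at hle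
      have hyp := hm₁ y p hp
      have hny := hnorm x y
      rcases le_or_gt R ‖x - y‖ with hz | hz
      · have hq' := hR (x - y) q hq hz
        refine le_trans ?_ (le_max_right (B + R) _)
        nlinarith [norm_nonneg y, norm_nonneg (x - y), norm_nonneg φ₁]
      · refine le_trans ?_ (le_max_left (B + R) _)
        linarith
  · -- bounded-below + coercive case
    obtain ⟨R₀, hR₀⟩ := hco (max 0 (c - mf + 1))
    set R : ℝ := max R₀ 0 with hRdef
    have hR0 : (0:ℝ) ≤ R := le_max_right _ _
    have hR : ∀ (z : H) (q : ℝ), g z = (q : EReal) → R ≤ ‖z‖ → max 0 (c - mf + 1) ≤ q := by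
      intro z q hq hz
      have := hR₀ z (le_trans (le_max_left _ _) hz)
      rw [hq, EReal.coe_le_coe_iff] at this
      exact this
    have hmf' : ∀ (y : H) (p : ℝ), f y = (p : EReal) → mf ≤ p := by
      intro y p hp
      have := hmf y
      rw [hp, EReal.coe_le_coe_iff] at this
      exact this
    refine ⟨B + R, mf + min 0 (-(‖φ₂‖ * R) - c₂), ?_, ?_⟩
    · intro x y hx
      rcases eq_or_ne (f y) ⊤ with h | h
      · rw [h, EReal.top_add_of_ne_bot (hg₀.1 _)]; exact le_top
      rcases eq_or_ne (g (x - y)) ⊤ with h' | h'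
      · rw [h', EReal.add_top_of_ne_bot (hf₀.1 _)]; exact le_top
      obtain ⟨p, hp⟩ := EReal.exists_real (hf₀.1 y) h
      obtain ⟨q, hq⟩ := EReal.exists_real (hg₀.1 (x - y)) h'
      rw [hp, hq, ← EReal.coe_add, EReal.coe_le_coe_iff]
      have hyp := hmf' y p hp
      rcases le_or_gt R ‖x - y‖ with hz | hz
      · have hq' := hR (x - y) q hq hz
        have : (0:ℝ) ≤ q := le_trans (le_max_left _ _) hq'
        have hminle : min (0:ℝ) (-(‖φ₂‖ * R) - c₂) ≤ 0 := min_le_left _ _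
        linarith
      · have hq' := hm₂ (x - y) q hq
        have hminle : min (0:ℝ) (-(‖φ₂‖ * R) - c₂) ≤ -(‖φ₂‖ * R) - c₂ := min_le_right _ _
        nlinarith [norm_nonneg (x - y), norm_nonneg φ₂]
    · intro x y hx hle
      have h : f y ≠ ⊤ := by
        rintro h
        rw [h, EReal.top_add_of_ne_bot (hg₀.1 _)] at hle
        exact absurd hle (not_le.mpr (EReal.coe_lt_top c))
      have h' : g (x - y) ≠ ⊤ := by
        rintro h'
        rw [h', EReal.add_top_of_ne_bot (hf₀.1 _)] at hle
        exact absurd hle (not_le.mpr (EReal.coe_lt_top c))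
      obtain ⟨p, hp⟩ := EReal.exists_real (hf₀.1 y) h
      obtain ⟨q, hq⟩ := EReal.exists_real (hg₀.1 (x - y)) h'
      rw [hp, hq, ← EReal.coe_add, EReal.coe_le_coe_iff] at hle
      have hyp := hmf' y p hp
      rcases le_or_gt R ‖x - y‖ with hz | hz
      · exfalso
        have hq' := hR (x - y) q hq hz
        have : c - mf + 1 ≤ q := le_trans (le_max_right _ _) hq'
        linarith
      · have := hnorm x y
        linarith

/-- lower semicontinuity of the infimal convolution under coercivity -/
lemma infConv_lsc (f g : H → EReal) (hf₀ : EProper f) (hf₁ : LowerSemicontinuous f)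
    (hf₂ : EConvexOn f) (hg₀ : EProper g) (hg₁ : LowerSemicontinuous g) (hg₂ : EConvexOn g)
    (hcoer : ESupercoercive g ∨ ((∃ m : ℝ, ∀ x, (m : EReal) ≤ f x) ∧ ECoercive g)) :
    LowerSemicontinuous (infConv f g) := by
  intro x t ht
  obtain ⟨τ, hτ1, hτ2⟩ := EReal.exists_between_coe_real ht
  have main : ∀ᶠ x' in 𝓝 x, (τ : EReal) < infConv f g x' := by
    by_contra hcon
    have hfreq0 : ∃ᶠ x' in 𝓝 x, ¬((τ : EReal) < infConv f g x') := Filter.not_eventually.mp hcon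
    have hδ : ∀ n : ℕ, (0:ℝ) < 1 / ((n : ℝ) + 1) := by
      intro n; positivity
    have hxs : ∀ n : ℕ, ∃ x', dist x' x < 1 / ((n : ℝ) + 1) ∧ infConv f g x' ≤ (τ : EReal) := by
      intro n
      obtain ⟨x', h1, h2⟩ := (hfreq0.and_eventually
        (Metric.ball_mem_nhds x (hδ n))).exists
      exact ⟨x', h2, not_lt.mp h1⟩
    choose xs hxd hxv using hxs
    have hys : ∀ n : ℕ, ∃ y', f y' + g (xs n - y') < ((τ + 1 / ((n : ℝ) + 1) : ℝ) : EReal) := by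
      intro n
      apply iInf_lt_iff.mp
      refine lt_of_le_of_lt (hxv n) ?_
      exact_mod_cast (by linarith [hδ n] : τ < τ + 1 / ((n : ℝ) + 1))
    choose ys hysv using hys
    obtain ⟨ρ, m, hlow, hbnd⟩ := infConv_bounds f g hf₀ hf₁ hf₂ hg₀ hg₁ hg₂ hcoer (‖x‖ + 1) (τ + 1)
    have hxnorm : ∀ n, ‖xs n‖ ≤ ‖x‖ + 1 := by
      intro n
      have h1 : ‖xs n‖ - ‖x‖ ≤ ‖xs n - x‖ := norm_sub_norm_le _ _
      have h2 : ‖xs n - x‖ < 1 / ((n : ℝ) + 1) := by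
        rw [← dist_eq_norm]; exact hxd n
      have h3 : 1 / ((n : ℝ) + 1) ≤ 1 := by
        rw [div_le_one (by positivity)]
        simp
      linarith
    have hsum_le : ∀ n, f (ys n) + g (xs n - ys n) ≤ ((τ + 1 : ℝ) : EReal) := by
      intro n
      refine (hysv n).le.trans ?_
      exact_mod_cast (by linarith [hδ n, (by rw [div_le_one (by positivity)]; simp :
        1 / ((n : ℝ) + 1) ≤ 1)] : τ + 1 / ((n : ℝ) + 1) ≤ τ + 1)
    have hynorm : ∀ n, ‖ys n‖ ≤ ρ := fun n => hbnd (xs n) (ys n) (hxnorm n) (hsum_le n)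
    set zs : ℕ → H := fun n => xs n - ys n with hzs
    have hznorm : ∀ n, ‖zs n‖ ≤ ‖x‖ + 1 + ρ := by
      intro n
      have := norm_sub_le (xs n) (ys n)
      have h1 := hxnorm n
      have h2 := hynorm n
      simp only [hzs]
      linarith
    set T := InnerProductSpace.toDual ℝ H with hT
    set F : ℕ → WeakDual ℝ H × WeakDual ℝ H :=
      fun n => (StrongDual.toWeakDual (T (ys n)), StrongDual.toWeakDual (T (zs n)))
      with hF
    set K : Set (WeakDual ℝ H × WeakDual ℝ H) :=
      (WeakDual.toStrongDual ⁻¹' Metric.closedBall 0 ρ) ×ˢ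
      (WeakDual.toStrongDual ⁻¹' Metric.closedBall 0 (‖x‖ + 1 + ρ)) with hK
    have hKc : IsCompact K :=
      (WeakDual.isCompact_closedBall (𝕜 := ℝ) 0 ρ).prod (WeakDual.isCompact_closedBall (𝕜 := ℝ) 0 (‖x‖ + 1 + ρ))
    have hFK : ∀ n, F n ∈ K := by
      intro n
      constructor
      · simp only [Set.mem_preimage, Metric.mem_closedBall, dist_zero_right]
        have : WeakDual.toStrongDual (StrongDual.toWeakDual (T (ys n))) = T (ys n) := rfl
        rw [this]
        rw [T.norm_map]
        exact hynorm n
      · simp only [Set.mem_preimage, Metric.mem_closedBall, dist_zero_right]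
        have : WeakDual.toStrongDual (StrongDual.toWeakDual (T (zs n))) = T (zs n) := rfl
        rw [this]
        rw [T.norm_map]
        exact hznorm n
    have hle : Filter.map F Filter.atTop ≤ Filter.principal K :=
      Filter.le_principal_iff.mpr (Filter.mem_map.mpr
        (Filter.Eventually.of_forall hFK))
    obtain ⟨P, _hPmem, hclus⟩ := hKc.exists_clusterPt hle
    obtain ⟨Ψ, Χ⟩ := P
    set y : H := T.symm (WeakDual.toStrongDual Ψ) with hy
    set z : H := T.symm (WeakDual.toStrongDual Χ) with hz
    have hyval : ∀ w : H, (inner ℝ y w : ℝ) = Ψ w := by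
      intro w
      rw [hy]
      exact InnerProductSpace.toDual_symm_apply
    have hzval : ∀ w : H, (inner ℝ z w : ℝ) = Χ w := by
      intro w
      rw [hz]
      exact InnerProductSpace.toDual_symm_apply
    -- the key frequent approximation property
    have hkey : ∀ (φ a : H) (ε : ℝ), 0 < ε → ∀ N : ℕ, ∃ n, N ≤ n ∧
        |(inner ℝ (ys n) φ : ℝ) - (inner ℝ y φ : ℝ)| < ε ∧
        |(inner ℝ (zs n) a : ℝ) - (inner ℝ z a : ℝ)| < ε := by
      intro φ a ε hε N
      have hU : ((fun d : WeakDual ℝ H => d φ) ⁻¹' Metric.ball (Ψ φ) ε) ×ˢ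
          ((fun d : WeakDual ℝ H => d a) ⁻¹' Metric.ball (Χ a) ε) ∈ 𝓝 (Ψ, Χ) := by
        refine prod_mem_nhds ?_ ?_
        · exact (Metric.isOpen_ball.preimage (WeakDual.eval_continuous φ)).mem_nhds
            (by simp [Metric.mem_ball, dist_self, hε])
        · exact (Metric.isOpen_ball.preimage (WeakDual.eval_continuous a)).mem_nhds
            (by simp [Metric.mem_ball, dist_self, hε])
      have hV : F '' Set.Ici N ∈ Filter.map F Filter.atTop :=
        Filter.image_mem_map (Filter.Ici_mem_atTop N)
      obtain ⟨p, hp1, hp2⟩ := clusterPt_iff_nonempty.mp hclus hU hV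
      obtain ⟨n, hn, rfl⟩ := hp2
      refine ⟨n, hn, ?_, ?_⟩
      · have h1 := hp1.1
        simp only [Set.mem_preimage, Metric.mem_ball, Real.dist_eq] at h1
        have h2 : (F n).1 φ = (inner ℝ (ys n) φ : ℝ) := InnerProductSpace.toDual_apply_apply
        rw [h2, ← hyval φ] at h1
        exact h1
      · have h1 := hp1.2
        simp only [Set.mem_preimage, Metric.mem_ball, Real.dist_eq] at h1
        have h2 : (F n).2 a = (inner ℝ (zs n) a : ℝ) := InnerProductSpace.toDual_apply_apply
        rw [h2, ← hzval a] at h1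
        exact h1
    -- Claim B : y + z = x
    have hsumpt : y + z = x := by
      have hzero : ∀ w : H, (inner ℝ (y + z - x) w : ℝ) = 0 := by
        intro w
        by_contra hne
        set s : ℝ := |(inner ℝ (y + z - x) w : ℝ)| with hs
        have hspos : 0 < s := abs_pos.mpr hne
        obtain ⟨N, hN⟩ := exists_nat_one_div_lt
          (show (0:ℝ) < s / (4 * (‖w‖ + 1)) by positivity)
        obtain ⟨n, hn, h1, h2⟩ := hkey w w (s / 4) (by positivity) N
        have hxw : |(inner ℝ (xs n - x) w : ℝ)| ≤ ‖xs n - x‖ * ‖w‖ := by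
          have := abs_real_inner_le_norm (xs n - x) w
          exact this
        have hxn : ‖xs n - x‖ < 1 / ((N : ℝ) + 1) := by
          have := hxd n
          rw [dist_eq_norm] at this
          refine this.trans_le ?_
          apply one_div_le_one_div_of_le (by positivity)
          have : (N : ℝ) ≤ (n : ℝ) := Nat.cast_le.mpr hn
          linarith
        have hsplit : (inner ℝ (y + z - x) w : ℝ) =
            ((inner ℝ y w : ℝ) - inner ℝ (ys n) w) + ((inner ℝ z w : ℝ) - inner ℝ (zs n) w)
            + (inner ℝ (xs n - x) w : ℝ) := by
          have e1 : (inner ℝ (y + z - x) w : ℝ) = inner ℝ y w + inner ℝ z w - inner ℝ x w := by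
            rw [inner_sub_left, inner_add_left]
          have e2 : (inner ℝ (xs n - x) w : ℝ) = inner ℝ (xs n) w - inner ℝ x w := by
            rw [inner_sub_left]
          have e3 : (inner ℝ (xs n) w : ℝ) = inner ℝ (ys n) w + inner ℝ (zs n) w := by
            rw [← inner_add_left]
            congr 1
            simp [hzs]
          rw [e1, e2, e3]
          ring
        have hb1 : |(inner ℝ y w : ℝ) - inner ℝ (ys n) w| < s / 4 := by
          rw [abs_sub_comm]; exact h1
        have hb2 : |(inner ℝ z w : ℝ) - inner ℝ (zs n) w| < s / 4 := by
          rw [abs_sub_comm]; exact h2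
        have hb3 : |(inner ℝ (xs n - x) w : ℝ)| < s / 4 := by
          refine hxw.trans_lt ?_
          have hw1 : ‖w‖ ≤ ‖w‖ + 1 := by linarith
          calc ‖xs n - x‖ * ‖w‖ ≤ (1 / ((N : ℝ) + 1)) * (‖w‖ + 1) := by
                apply mul_le_mul hxn.le hw1 (norm_nonneg w) (by positivity)
            _ < (s / (4 * (‖w‖ + 1))) * (‖w‖ + 1) := by
                apply mul_lt_mul_of_pos_right hN (by positivity)
            _ = s / 4 := by field_simp
        have habs : s ≤ |((inner ℝ y w : ℝ) - inner ℝ (ys n) w) + ((inner ℝ z w : ℝ) - inner ℝ (zs n) w)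
            + (inner ℝ (xs n - x) w : ℝ)| := by
          rw [hs, hsplit]
        have htri : |((inner ℝ y w : ℝ) - inner ℝ (ys n) w) + ((inner ℝ z w : ℝ) - inner ℝ (zs n) w)
            + (inner ℝ (xs n - x) w : ℝ)| ≤
            |(inner ℝ y w : ℝ) - inner ℝ (ys n) w| + |(inner ℝ z w : ℝ) - inner ℝ (zs n) w|
            + |(inner ℝ (xs n - x) w : ℝ)| := by
          refine (abs_add_le _ _).trans ?_
          gcongr
          exact abs_add_le _ _
        linarith
      have : (inner ℝ (y + z - x) (y + z - x) : ℝ) = 0 := hzero (y + z - x)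
      have h0 : y + z - x = 0 := by
        rwa [inner_self_eq_zero] at this
      exact sub_eq_zero.mp h0
    -- Claim A : f y + g z ≤ τ
    have hclaimA : f y + g z ≤ (τ : EReal) := by
      apply EReal.add_le_of_forall_lt
      intro a' ha' b' hb'
      rcases eq_or_ne a' ⊥ with rfl | ha'b
      · rw [EReal.bot_add]; exact bot_le
      rcases eq_or_ne b' ⊥ with rfl | hb'b
      · rw [EReal.add_bot]; exact bot_le
      obtain ⟨t₁, ht₁a, ht₁⟩ := EReal.exists_between_coe_real ha'
      obtain ⟨t₂, ht₂a, ht₂⟩ := EReal.exists_between_coe_real hb'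
      suffices hsum : t₁ + t₂ ≤ τ by
        calc a' + b' ≤ (t₁ : EReal) + (t₂ : EReal) := add_le_add ht₁a.le ht₂a.le
          _ = ((t₁ + t₂ : ℝ) : EReal) := by rw [← EReal.coe_add]
          _ ≤ (τ : EReal) := EReal.coe_le_coe_iff.mpr hsum
      obtain ⟨φ, hφ⟩ := fm_exists f hf₀ hf₁ hf₂ y t₁ ht₁
      obtain ⟨a, ha⟩ := fm_exists g hg₀ hg₁ hg₂ z t₂ ht₂
      have hφtop : conj f φ ≠ ⊤ := by
        rintro h
        rw [h, show ((inner ℝ φ y : ℝ) : EReal) - ⊤ = ⊥ by rfl] at hφ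
        exact absurd hφ (not_lt.mpr bot_le)
      obtain ⟨C₁, hC₁⟩ := EReal.exists_real (conj_ne_bot f hf₀ φ) hφtop
      have hatop : conj g a ≠ ⊤ := by
        rintro h
        rw [h, show ((inner ℝ a z : ℝ) : EReal) - ⊤ = ⊥ by rfl] at ha
        exact absurd ha (not_lt.mpr bot_le)
      obtain ⟨C₂, hC₂⟩ := EReal.exists_real (conj_ne_bot g hg₀ a) hatop
      rw [hC₁, ← EReal.coe_sub, EReal.coe_lt_coe_iff] at hφ
      rw [hC₂, ← EReal.coe_sub, EReal.coe_lt_coe_iff] at ha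
      have hminf : ∀ (w : H) (p : ℝ), f w = (p : EReal) → inner ℝ φ w - C₁ ≤ p := by
        intro w p hp
        have := affine_le_of_conj f hf₀.1 φ w
        rw [hC₁, hp, ← EReal.coe_sub, EReal.coe_le_coe_iff] at this
        exact this
      have hming : ∀ (w : H) (q : ℝ), g w = (q : EReal) → inner ℝ a w - C₂ ≤ q := by
        intro w q hq
        have := affine_le_of_conj g hg₀.1 a w
        rw [hC₂, hq, ← EReal.coe_sub, EReal.coe_le_coe_iff] at this
        exact this
      have hfin : ∀ N : ℕ, t₁ + t₂ < τ + 1 / ((N : ℝ) + 1) := by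
        intro N
        have hε₁ : (0:ℝ) < inner ℝ φ y - C₁ - t₁ := by linarith
        have hε₂ : (0:ℝ) < inner ℝ a z - C₂ - t₂ := by linarith
        obtain ⟨n, hn, h1, h2⟩ := hkey φ a
          (min (inner ℝ φ y - C₁ - t₁) (inner ℝ a z - C₂ - t₂)) (lt_min hε₁ hε₂) N
        have hsn := hysv n
        obtain ⟨p, q, hp, hq, hpq⟩ := EReal.add_lt_coe (hf₀.1 _) (hg₀.1 _) hsn
        have hfp : inner ℝ φ (ys n) - C₁ ≤ p := hminf (ys n) p hp
        have hgq : inner ℝ a (zs n) - C₂ ≤ q := hming (zs n) q hq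
        have h1' : |(inner ℝ (ys n) φ : ℝ) - inner ℝ y φ| < inner ℝ φ y - C₁ - t₁ :=
          h1.trans_le (min_le_left _ _)
        have h2' : |(inner ℝ (zs n) a : ℝ) - inner ℝ z a| < inner ℝ a z - C₂ - t₂ :=
          h2.trans_le (min_le_right _ _)
        have e1 : (inner ℝ (ys n) φ : ℝ) = inner ℝ φ (ys n) := real_inner_comm _ _
        have e2 : (inner ℝ y φ : ℝ) = inner ℝ φ y := real_inner_comm _ _
        have e3 : (inner ℝ (zs n) a : ℝ) = inner ℝ a (zs n) := real_inner_comm _ _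
        have e4 : (inner ℝ z a : ℝ) = inner ℝ a z := real_inner_comm _ _
        rw [e1, e2] at h1'
        rw [e3, e4] at h2'
        have hab1 := abs_lt.mp h1'
        have hab2 := abs_lt.mp h2'
        have hmono : 1 / ((n : ℝ) + 1) ≤ 1 / ((N : ℝ) + 1) := by
          apply one_div_le_one_div_of_le (by positivity)
          have : (N : ℝ) ≤ (n : ℝ) := Nat.cast_le.mpr hn
          linarith
        have ht₁p : t₁ < p := by linarith [hab1.1]
        have ht₂q : t₂ < q := by linarith [hab2.1]
        linarith
      by_contra hgt
      push_neg at hgt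
      obtain ⟨N, hN⟩ := exists_nat_one_div_lt (show (0:ℝ) < t₁ + t₂ - τ by linarith)
      have := hfin N
      linarith
    have hfinal : infConv f g x ≤ (τ : EReal) := by
      have h1 : infConv f g x ≤ f y + g (x - y) := iInf_le _ y
      have h2 : x - y = z := by rw [← hsumpt]; abel
      rw [h2] at h1
      exact h1.trans hclaimA
    exact lt_irrefl _ (hτ2.trans_le hfinal)
  refine main.mono fun x' hx' => hτ1.trans hx'

lemma infConv_ne_bot (f g : H → EReal) (hf₀ : EProper f) (hf₁ : LowerSemicontinuous f)
    (hf₂ : EConvexOn f) (hg₀ : EProper g) (hg₁ : LowerSemicontinuous g) (hg₂ : EConvexOn g)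
    (hcoer : ESupercoercive g ∨ ((∃ m : ℝ, ∀ x, (m : EReal) ≤ f x) ∧ ECoercive g)) :
    ∀ x : H, infConv f g x ≠ ⊥ := by
  intro x
  obtain ⟨ρ, m, hlow, _⟩ := infConv_bounds f g hf₀ hf₁ hf₂ hg₀ hg₁ hg₂ hcoer ‖x‖ 0
  have hm : (m : EReal) ≤ infConv f g x := le_iInf fun y => hlow x y le_rfl
  intro hc
  rw [hc, le_bot_iff] at hm
  exact EReal.coe_ne_bot m hm

theorem biconjugate_infConv (f g : H → EReal)
    (hf₀ : EProper f) (hf₁ : LowerSemicontinuous f) (hf₂ : EConvexOn f) (hg₀ : EProper g) (hg₁ : LowerSemicontinuous g) (hg₂ : EConvexOn g)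
    (hcoer : ESupercoercive g ∨ ((∃ m : ℝ, ∀ x, (m : EReal) ≤ f x) ∧ ECoercive g)) :
    ∀ x : H, (⨆ φ : H, ((inner ℝ φ x : ℝ) : EReal) - (conj f φ + conj g φ)) = infConv f g x := by
  intro x
  have hbot : ∀ x : H, infConv f g x ≠ ⊥ :=
    infConv_ne_bot f g hf₀ hf₁ hf₂ hg₀ hg₁ hg₂ hcoer
  have hproper : EProper (infConv f g) := by
    refine ⟨hbot, ?_⟩
    obtain ⟨a, hfa⟩ := hf₀.2
    obtain ⟨b, hgb⟩ := hg₀.2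
    obtain ⟨p, hp⟩ := EReal.exists_real (hf₀.1 a) hfa
    obtain ⟨q, hq⟩ := EReal.exists_real (hg₀.1 b) hgb
    refine ⟨a + b, ?_⟩
    have h1 : infConv f g (a + b) ≤ f a + g (a + b - a) := iInf_le _ a
    rw [show a + b - a = b by abel, hp, hq, ← EReal.coe_add] at h1
    exact (h1.trans_lt (EReal.coe_lt_top _)).ne
  have hlsc := infConv_lsc f g hf₀ hf₁ hf₂ hg₀ hg₁ hg₂ hcoer
  have hcvx := infConv_convex f g hf₀.1 hg₀.1 hf₂ hg₂ hbot
  have hFM := fenchelMoreau (infConv f g) hproper hlsc hcvx x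
  rw [← hFM]
  apply congrArg iSup
  funext φ
  rw [conj_infConv f g hf₀.1 hg₀.1 hbot φ]
end
end

section
/- Let H be a real Hilbert space, let f : H → ℝ ∪ {+∞} be a proper lower semicontinuous convex function (f ∈ Γ₀(H)), let ε > 0 and x ∈ H, and let p = prox_{εf}(x) be the unique minimizer over y ∈ H of f(y) + ‖x−y‖²/(2ε). Then the Moreau envelope ^εf is Fréchet differentiable at x with derivative ∇^εf(x) = ε⁻¹ (x − p): that is, ^εf(x + h) = ^εf(x) + ⟨ε⁻¹(x − p), h⟩ + o(‖h‖) as h → 0 in H. -/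
noncomputable section
open Filter Topology Pointwise

variable {H : Type*} [NormedAddCommGroup H] [InnerProductSpace ℝ H] [CompleteSpace H]

set_option maxHeartbeats 1000000 in
/-- Subgradient inequality at the proximal point. -/
lemma moreau_subgrad_aux {f : H → EReal} (hf₂ : EConvexOn f) {ε : ℝ} (hε : 0 < ε)
    {x p : H} (hp : IsProx ε f x p) (hbot : ∀ w, f w ≠ ⊥) (htop : f p ≠ ⊤) (y : H) :
    (((f p).toReal + inner ℝ (ε⁻¹ • (x - p)) (y - p) : ℝ) : EReal) ≤ f y := by
  rcases eq_or_ne (f y) ⊤ with hy | hy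
  · rw [hy]; exact le_top
  set a := (f p).toReal with ha
  set b := (f y).toReal with hb
  have hfp : f p = (a : EReal) := (EReal.coe_toReal htop (hbot p)).symm
  have hfy : f y = (b : EReal) := (EReal.coe_toReal hy (hbot y)).symm
  rw [hfy, EReal.coe_le_coe_iff]
  have hinner : (inner ℝ (ε⁻¹ • (x - p)) (y - p) : ℝ) = ε⁻¹ * inner ℝ (x - p) (y - p) :=
    real_inner_smul_left _ _ _
  rcases eq_or_ne y p with rfl | hyp
  · simp [hinner, ha, hb]
  have hnv : (0:ℝ) < ‖y - p‖ ^ 2 := by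
    have h0 : y - p ≠ 0 := sub_ne_zero.mpr hyp
    exact pow_pos (norm_pos_iff.mpr h0) 2
  refine le_of_forall_pos_le_add fun δ hδ => ?_
  set t : ℝ := min (2 * ε * δ / ‖y - p‖ ^ 2) (1/2) with htdef
  have ht0 : 0 < t := lt_min (div_pos (mul_pos (mul_pos two_pos hε) hδ) hnv) (by norm_num)
  have ht1 : t < 1 := lt_of_le_of_lt (min_le_right _ _) (by norm_num)
  have ht_le : t * ‖y - p‖ ^ 2 ≤ 2 * ε * δ := by
    have h1 : t ≤ 2 * ε * δ / ‖y - p‖ ^ 2 := min_le_left _ _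
    calc t * ‖y - p‖ ^ 2 ≤ (2 * ε * δ / ‖y - p‖ ^ 2) * ‖y - p‖ ^ 2 :=
          mul_le_mul_of_nonneg_right h1 (le_of_lt hnv)
      _ = 2 * ε * δ := div_mul_cancel₀ _ hnv.ne'
  set zt : H := t • y + (1 - t) • p with hzt
  set ct : ℝ := ‖x - zt‖ ^ 2 / (2 * ε) with hct
  set c : ℝ := ‖x - p‖ ^ 2 / (2 * ε) with hc
  have h2 := hf₂ y p t ht0 ht1
  have h4 : ((a + c : ℝ) : EReal) ≤ ((t * b + (1 - t) * a + ct : ℝ) : EReal) := by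
    calc ((a + c : ℝ) : EReal) = f p + (c : EReal) := by rw [hfp, ← EReal.coe_add]
      _ ≤ f zt + (ct : EReal) := hp zt
      _ ≤ ((t : EReal) * f y + ((1 - t : ℝ) : EReal) * f p) + (ct : EReal) :=
          add_le_add_left h2 _
      _ = ((t * b + (1 - t) * a + ct : ℝ) : EReal) := by
          rw [hfp, hfy, ← EReal.coe_mul, ← EReal.coe_mul, ← EReal.coe_add, ← EReal.coe_add]
  have h5 : a + c ≤ t * b + (1 - t) * a + ct := EReal.coe_le_coe_iff.mp h4
  set d : ℝ := inner ℝ (x - p) (y - p) with hd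
  have hz : x - zt = (x - p) - t • (y - p) := by
    rw [hzt]; module
  have hnorm : ‖x - zt‖ ^ 2 = ‖x - p‖ ^ 2 - 2 * (t * d) + t ^ 2 * ‖y - p‖ ^ 2 := by
    rw [hz, norm_sub_sq_real, real_inner_smul_right, norm_smul, Real.norm_eq_abs, mul_pow,
      sq_abs, hd]
  have h2e : (0:ℝ) < 2 * ε := by positivity
  have h6 : (2 * ε) * (a + c) ≤ (2 * ε) * (t * b + (1 - t) * a + ct) :=
    mul_le_mul_of_nonneg_left h5 (le_of_lt h2e)
  have hcc : (2 * ε) * c = ‖x - p‖ ^ 2 := by rw [hc]; field_simp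
  have hctc : (2 * ε) * ct = ‖x - zt‖ ^ 2 := by rw [hct]; field_simp
  have h7 : (2 * ε) * a + ‖x - p‖ ^ 2
      ≤ (2 * ε) * (t * b + (1 - t) * a) + (‖x - p‖ ^ 2 - 2 * (t * d) + t ^ 2 * ‖y - p‖ ^ 2) := by
    have := h6
    rw [mul_add, mul_add, hcc, hctc, hnorm] at this
    linarith [this]
  -- divide by t
  have ht2 : t ^ 2 * ‖y - p‖ ^ 2 ≤ t * (2 * ε * δ) := by
    have h := mul_le_mul_of_nonneg_left ht_le (le_of_lt ht0)
    linarith [h]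
  have h8 : t * (2 * ε * (a - b) + 2 * d) ≤ t * (2 * ε * δ) := by
    linarith [h7, ht2]
  have h9 : 2 * ε * (a - b) + 2 * d ≤ 2 * ε * δ :=
    le_of_mul_le_mul_left (by linarith [h8]) ht0
  have h10 : ε⁻¹ * d ≤ δ - a + b := by
    rw [inv_mul_eq_div, div_le_iff₀ hε]
    linarith [h9]
  rw [hinner]
  linarith [h10]

set_option maxHeartbeats 1000000 in
theorem moreau_deriv_eq_prox (f : H → EReal)
    (hf₀ : EProper f) (hf₁ : LowerSemicontinuous f) (hf₂ : EConvexOn f) (ε : ℝ) (hε : 0 < ε) (x p : H) (hp : IsProx ε f x p) :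
    (∀ z : H, moreau ε f z ≠ ⊤ ∧ moreau ε f z ≠ ⊥) ∧
    HasFDerivAt (fun z : H => (moreau ε f z).toReal) (innerSL ℝ (ε⁻¹ • (x - p))) x := by
  obtain ⟨hbot, y₀, hy₀⟩ := hf₀
  have h2e : (0:ℝ) < 2 * ε := by positivity
  have htop : f p ≠ ⊤ := by
    intro h
    have h1 := hp y₀
    rw [h, EReal.top_add_coe, ← EReal.coe_toReal hy₀ (hbot y₀), ← EReal.coe_add,
      top_le_iff] at h1
    exact EReal.coe_ne_top _ h1
  set a : ℝ := (f p).toReal with ha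
  set φ : H := ε⁻¹ • (x - p) with hφdef
  set c : ℝ := ‖x - p‖ ^ 2 / (2 * ε) with hc
  have hfp : f p = (a : EReal) := (EReal.coe_toReal htop (hbot p)).symm
  have hsub : ∀ y : H, ((a + inner ℝ φ (y - p) : ℝ) : EReal) ≤ f y :=
    moreau_subgrad_aux hf₂ hε hp hbot htop
  -- upper bound
  have hub : ∀ z : H, moreau ε f z ≤ ((a + ‖z - p‖ ^ 2 / (2 * ε) : ℝ) : EReal) := by
    intro z
    have h1 : moreau ε f z ≤ f p + ((‖z - p‖ ^ 2 / (2 * ε) : ℝ) : EReal) :=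
      iInf_le (fun y => f y + ((‖z - y‖ ^ 2 / (2 * ε) : ℝ) : EReal)) p
    rwa [hfp, ← EReal.coe_add] at h1
  -- lower bound
  have hlb : ∀ z : H, ((a + inner ℝ φ (z - p) - ε * ‖φ‖ ^ 2 / 2 : ℝ) : EReal) ≤ moreau ε f z := by
    intro z
    refine le_iInf fun y => ?_
    rcases eq_or_ne (f y) ⊤ with hy | hy
    · rw [hy, EReal.top_add_coe]; exact le_top
    have hb := hsub y
    have h1 : ((a + inner ℝ φ (z - p) - ε * ‖φ‖ ^ 2 / 2 : ℝ) : EReal)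
        ≤ ((a + inner ℝ φ (y - p) : ℝ) : EReal) + ((‖z - y‖ ^ 2 / (2 * ε) : ℝ) : EReal) := by
      rw [← EReal.coe_add, EReal.coe_le_coe_iff]
      have hcs : (inner ℝ φ (z - y) : ℝ) ≤ ‖φ‖ * ‖z - y‖ := real_inner_le_norm _ _
      have hsplit : (inner ℝ φ (z - p) : ℝ) = inner ℝ φ (z - y) + inner ℝ φ (y - p) := by
        rw [← inner_add_right]; congr 1; abel
      have key : ‖φ‖ * ‖z - y‖ - ε * ‖φ‖ ^ 2 / 2 ≤ ‖z - y‖ ^ 2 / (2 * ε) := by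
        rw [← sub_nonneg]
        have expand : ‖z - y‖ ^ 2 / (2 * ε) - (‖φ‖ * ‖z - y‖ - ε * ‖φ‖ ^ 2 / 2)
            = (‖z - y‖ - ε * ‖φ‖) ^ 2 / (2 * ε) := by
          field_simp
          ring
        rw [expand]
        positivity
      linarith [hcs, key, hsplit.le, hsplit.ge]
    exact h1.trans (add_le_add_left hb _)
  have hne : ∀ z : H, moreau ε f z ≠ ⊤ ∧ moreau ε f z ≠ ⊥ := by
    intro z
    constructor
    · exact ((hub z).trans_lt (EReal.coe_lt_top _)).ne
    · exact ((EReal.bot_lt_coe _).trans_le (hlb z)).ne'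
  refine ⟨hne, ?_⟩
  -- real-valued bounds
  set m : H → ℝ := fun z => (moreau ε f z).toReal with hm
  have hm_ub : ∀ z : H, m z ≤ a + ‖z - p‖ ^ 2 / (2 * ε) := by
    intro z
    have := EReal.toReal_le_toReal (hub z) (hne z).2 (EReal.coe_ne_top _)
    rwa [EReal.toReal_coe] at this
  have hm_lb : ∀ z : H, a + inner ℝ φ (z - p) - ε * ‖φ‖ ^ 2 / 2 ≤ m z := by
    intro z
    have := EReal.toReal_le_toReal (hlb z) (EReal.coe_ne_bot _) (hne z).1
    rwa [EReal.toReal_coe] at this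
  have hmx : m x = a + c := by
    have hle : moreau ε f x ≤ ((a + c : ℝ) : EReal) := hub x
    have hge : ((a + c : ℝ) : EReal) ≤ moreau ε f x := by
      refine le_iInf fun y => ?_
      have h1 := hp y
      rwa [hfp, ← EReal.coe_add] at h1
    have heq : moreau ε f x = ((a + c : ℝ) : EReal) := le_antisymm hle hge
    show (moreau ε f x).toReal = a + c
    rw [heq, EReal.toReal_coe]
  -- norm facts about φ
  have hφn : ε * ‖φ‖ ^ 2 / 2 = c := by
    rw [hφdef, hc, norm_smul, Real.norm_eq_abs, abs_of_pos (inv_pos.mpr hε), mul_pow]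
    field_simp
  have hφx : (inner ℝ φ (x - p) : ℝ) = 2 * c := by
    rw [hφdef, real_inner_smul_left, real_inner_self_eq_norm_sq, hc]
    field_simp
  -- key quantitative estimate
  have hkey : ∀ h : H, |m (x + h) - m x - inner ℝ φ h| ≤ ‖h‖ ^ 2 / (2 * ε) := by
    intro h
    have hxhp : x + h - p = (x - p) + h := by abel
    have hexp : ‖x + h - p‖ ^ 2 = ‖x - p‖ ^ 2 + 2 * inner ℝ (x - p) h + ‖h‖ ^ 2 := by
      rw [hxhp, norm_add_sq_real]
    have hφh : (inner ℝ φ h : ℝ) = ε⁻¹ * inner ℝ (x - p) h := real_inner_smul_left _ _ _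
    have hub' : m (x + h) ≤ a + c + inner ℝ φ h + ‖h‖ ^ 2 / (2 * ε) := by
      have := hm_ub (x + h)
      rw [hexp] at this
      have heq : ‖x - p‖ ^ 2 / (2*ε) = c := by rw [hc]
      have h2 : (‖x - p‖ ^ 2 + 2 * inner ℝ (x - p) h + ‖h‖ ^ 2) / (2 * ε)
          = c + inner ℝ φ h + ‖h‖ ^ 2 / (2 * ε) := by
        rw [hc, hφh]
        field_simp
      linarith [this, h2.le, h2.ge]
    have hlb' : a + c + inner ℝ φ h ≤ m (x + h) := by
      have := hm_lb (x + h)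
      rw [hφn] at this
      have hsplit : (inner ℝ φ (x + h - p) : ℝ) = inner ℝ φ (x - p) + inner ℝ φ h := by
        rw [hxhp, inner_add_right]
      rw [hsplit, hφx] at this
      linarith [this]
    rw [hmx, abs_le]
    constructor
    · have : (0:ℝ) ≤ ‖h‖ ^ 2 / (2 * ε) := by positivity
      linarith [hlb']
    · linarith [hub']
  -- conclude
  rw [hasFDerivAt_iff_isLittleO_nhds_zero]
  rw [Asymptotics.isLittleO_iff]
  intro C hC
  filter_upwards [Metric.ball_mem_nhds (0:H) (by positivity : (0:ℝ) < 2 * ε * C)] with h hh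
  rw [Metric.mem_ball, dist_zero_right] at hh
  have h1 := hkey h
  have h2 : ‖h‖ ^ 2 / (2 * ε) ≤ C * ‖h‖ := by
    rw [div_le_iff₀ h2e]
    nlinarith [norm_nonneg h, hh]
  calc ‖m (x + h) - m x - (innerSL ℝ φ) h‖ = |m (x + h) - m x - inner ℝ φ h| := by
        rw [innerSL_apply_apply, Real.norm_eq_abs]
    _ ≤ ‖h‖ ^ 2 / (2 * ε) := h1
    _ ≤ C * ‖h‖ := h2
end
end
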